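/- For every algebraically closed field K and every integer g ≥ 1, the g+1 polynomials Θ_0,…,Θ_g ∈ R_{g,1}, where Θ_i is the coefficient of y_0^{g−i}·y_1^{i} in det(y_0·T^(0)+y_1·T^(1)), are algebraically independent over K. -/

import Mathlib

set_option maxHeartbeats 1000000
set_option synthInstance.maxHeartbeats 400000


/-!
Setting: `R_{g,m-1}` is the polynomial ring over `K` in the variables `T^(l)_{ij}`,
`0 ≤ l ≤ m-1`, `1 ≤ i ≤ j ≤ g`, the entries of `m` generic symmetric `g × g` matrices,
with `SL_g` acting by congruence `T^(l) ↦ Λ · T^(l) · Λᵗ`.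
-/

open Matrix

noncomputable section

/-- The index set of the entries `(i, j)`, `i ≤ j`, of a symmetric `g × g` matrix. -/
abbrev SymIdx (g : ℕ) : Type := {p : Fin g × Fin g // p.1 ≤ p.2}

/-- A scalar matrix viewed as a matrix of constant polynomials. -/
def mapC (K : Type*) [CommRing K] (σ : Type*) {g : ℕ} (Λ : Matrix (Fin g) (Fin g) K) :
    Matrix (Fin g) (Fin g) (MvPolynomial σ K) :=
  Λ.map fun a => MvPolynomial.C a

/-- The `l`-th generic symmetric matrix `T^(l)` (`0 ≤ l ≤ m-1`), a symmetric matrix whose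
entries are the variables `T^(l)_{ij}`, with the convention `T^(l)_{ji} = T^(l)_{ij}`. -/
def genSym (K : Type*) [CommRing K] (g m : ℕ) (l : Fin m) :
    Matrix (Fin g) (Fin g) (MvPolynomial (Fin m × SymIdx g) K) :=
  Matrix.of fun i j =>
    if h : i ≤ j then MvPolynomial.X (l, ⟨(i, j), h⟩)
    else MvPolynomial.X (l, ⟨(j, i), le_of_not_ge h⟩)

/-- The `K`-algebra endomorphism sending each variable `T^(l)_{ij}` to the `(i,j)` entry of
`Λ · T^(l) · Λᵗ`. -/
def symAct (K : Type*) [CommRing K] (g m : ℕ) (Λ : Matrix (Fin g) (Fin g) K) :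
    MvPolynomial (Fin m × SymIdx g) K →ₐ[K] MvPolynomial (Fin m × SymIdx g) K :=
  MvPolynomial.aeval fun v : Fin m × SymIdx g =>
    (mapC K (Fin m × SymIdx g) Λ * genSym K g m v.1 *
      (mapC K (Fin m × SymIdx g) Λ)ᵀ) v.2.1.1 v.2.1.2

/-- The `K`-subalgebra of `SL_g`-invariant polynomials. -/
def symInvariants (K : Type*) [Field K] (g m : ℕ) :
    Subalgebra K (MvPolynomial (Fin m × SymIdx g) K) :=
  ⨅ Λ : SpecialLinearGroup (Fin g) K,
    AlgHom.equalizer (symAct K g m (Λ : Matrix (Fin g) (Fin g) K)) (AlgHom.id K _)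

/-- `Theta K g m μ` is the coefficient of the monomial `y_0^{μ 0} ⋯ y_{m-1}^{μ (m-1)}` in
`det (y_0 · T^(0) + ⋯ + y_{m-1} · T^(m-1))`, computed in the polynomial ring
`R_{g,m-1}[y_0, …, y_{m-1}]`. -/
def Theta (K : Type*) [CommRing K] (g m : ℕ) (μ : Fin m →₀ ℕ) :
    MvPolynomial (Fin m × SymIdx g) K :=
  MvPolynomial.coeff μ
    (Matrix.det (Matrix.of fun i j : Fin g =>
      ∑ l : Fin m, MvPolynomial.X l * MvPolynomial.C (genSym K g m l i j)))

/-- For `i ∈ {0, …, g}`, the polynomial `Θ_i`, the coefficient of `y_0^{g-i}·y_1^i` in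
`det (y_0 · T^(0) + y_1 · T^(1))`. -/
def ThetaPair (K : Type*) [Field K] (g : ℕ) (i : Fin (g + 1)) :
    MvPolynomial (Fin 2 × SymIdx g) K :=
  Theta K g 2 (Finsupp.single (0 : Fin 2) (g - (i : ℕ)) + Finsupp.single (1 : Fin 2) (i : ℕ))

namespace Stmt3Aux

open MvPolynomial

/-- Coefficients of a polynomial after rescaling each variable by a constant. -/
theorem coeff_aeval_rescale {R : Type*} [CommRing R] {σ : Type*} (c : σ → R)
    (p : MvPolynomial σ R) (m : σ →₀ ℕ) :
    coeff m (aeval (fun j : σ => C (c j) * X j) p)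
      = (m.prod fun j e => c j ^ e) * coeff m p := by
  classical
  induction p using MvPolynomial.induction_on' with
  | monomial u a =>
    rw [aeval_monomial]
    have hprod : (u.prod fun j e => (C (c j) * X j) ^ e : MvPolynomial σ R)
        = C (u.prod fun j e => c j ^ e) * monomial u 1 := by
      rw [Finsupp.prod, Finsupp.prod]
      have : ∀ j ∈ u.support, (C (c j) * X j) ^ u j
          = C (c j ^ u j) * (X j ^ u j : MvPolynomial σ R) := by
        intro j _; rw [mul_pow, ← map_pow]
      rw [Finset.prod_congr rfl this, Finset.prod_mul_distrib, ← map_prod]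
      congr 1
      rw [monomial_eq, C_1, one_mul, Finsupp.prod]
    rw [hprod, MvPolynomial.algebraMap_eq, ← mul_assoc, ← C_mul, C_mul_monomial,
      coeff_monomial, coeff_monomial]
    split_ifs with h
    · subst h; ring
    · simp
  | add p q hp hq => rw [map_add, coeff_add, coeff_add, mul_add, hp, hq]

/-- Rescaling the variables of a polynomial ring over a domain by nonzero constants is
injective. -/
theorem rescale_injective {R : Type*} [CommRing R] [IsDomain R] {σ : Type*} (c : σ → R)
    (hc : ∀ j, c j ≠ 0) :
    Function.Injective
      (aeval (fun j : σ => C (c j) * X j) : MvPolynomial σ R →ₐ[R] MvPolynomial σ R) := by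
  rw [injective_iff_map_eq_zero]
  intro p hp
  ext m
  have h0 := congrArg (coeff m) hp
  rw [coeff_aeval_rescale, coeff_zero] at h0
  have hw : (m.prod fun j e => c j ^ e) ≠ 0 := by
    rw [Finsupp.prod]
    exact Finset.prod_ne_zero_iff.mpr fun j _ => pow_ne_zero _ (hc j)
  rw [coeff_zero]
  rcases mul_eq_zero.1 h0 with h | h
  · exact absurd h hw
  · exact h

variable (K : Type*) [Field K] (g : ℕ)

/-- The specialization sending `T⁰ ↦ t·I` and `T¹ ↦ diag(X₀, …, X_{g-1})`, with values in
`K[t][X₀, …, X_{g-1}]`. -/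
def spec : MvPolynomial (Fin 2 × SymIdx g) K →ₐ[K] MvPolynomial (Fin g) (Polynomial K) :=
  aeval fun w =>
    if w.2.1.1 = w.2.1.2 then
      (if w.1 = 0 then C Polynomial.X else X w.2.1.1) else 0

theorem spec_genSym (l : Fin 2) (i j : Fin g) :
    spec K g (genSym K g 2 l i j)
      = if i = j then (if l = 0 then C Polynomial.X else X i) else 0 := by
  show spec K g (Matrix.of _ i j) = _
  rw [Matrix.of_apply]
  by_cases h : i ≤ j
  · rw [dif_pos h]; rw [spec, aeval_X]
  · rw [dif_neg h]; rw [spec, aeval_X]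
    have hij : ¬ i = j := fun e => h (le_of_eq e)
    have hji : ¬ j = i := fun e => h (le_of_eq e.symm)
    rw [if_neg hji, if_neg hij]

theorem spec_theta (i : Fin (g + 1)) :
    spec K g (ThetaPair K g i)
      = C (Polynomial.X ^ (g - (i : ℕ))) * esymm (Fin g) (Polynomial K) (i : ℕ) := by
  classical
  set P := Polynomial K
  set μ : Fin 2 →₀ ℕ :=
    Finsupp.single (0 : Fin 2) (g - (i : ℕ)) + Finsupp.single (1 : Fin 2) (i : ℕ) with hμ
  have hi : (i : ℕ) ≤ g := Fin.is_le i
  rw [show ThetaPair K g i = Theta K g 2 μ from rfl, Theta]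
  rw [show (spec K g) (MvPolynomial.coeff μ _)
      = MvPolynomial.coeff μ (MvPolynomial.map ((spec K g) : MvPolynomial (Fin 2 × SymIdx g) K →+* MvPolynomial (Fin g) P) (Matrix.det (Matrix.of fun a b : Fin g =>
      ∑ l : Fin 2, MvPolynomial.X l * MvPolynomial.C (genSym K g 2 l a b)))) from
    (coeff_map _ _ _).symm]
  have hdet := RingHom.map_det (S := MvPolynomial (Fin 2) (MvPolynomial (Fin g) P))
    ((MvPolynomial.map ((spec K g) : MvPolynomial (Fin 2 × SymIdx g) K →+* MvPolynomial (Fin g) P)) :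
      MvPolynomial (Fin 2) (MvPolynomial (Fin 2 × SymIdx g) K) →+* MvPolynomial (Fin 2) (MvPolynomial (Fin g) P))
    (Matrix.of fun a b : Fin g => ∑ l : Fin 2, MvPolynomial.X l * MvPolynomial.C (genSym K g 2 l a b))
  rw [RingHom.mapMatrix_apply] at hdet
  rw [hdet]
  have hmat : (Matrix.of fun a b : Fin g =>
        ∑ l : Fin 2, (MvPolynomial.X l : MvPolynomial (Fin 2) (MvPolynomial (Fin 2 × SymIdx g) K))
          * MvPolynomial.C (genSym K g 2 l a b)).map
        (MvPolynomial.map ((spec K g) : MvPolynomial (Fin 2 × SymIdx g) K →+* MvPolynomial (Fin g) P))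
      = Matrix.diagonal (fun k : Fin g =>
          (MvPolynomial.X 0 : MvPolynomial (Fin 2) (MvPolynomial (Fin g) P)) * C (C Polynomial.X)
            + MvPolynomial.X 1 * C (X k)) := by
    apply Matrix.ext
    intro a b
    rw [Matrix.map_apply, Matrix.of_apply, map_sum, Fin.sum_univ_two, _root_.map_mul,
      _root_.map_mul, MvPolynomial.map_X, MvPolynomial.map_X, MvPolynomial.map_C,
      MvPolynomial.map_C, AlgHom.coe_toRingHom, spec_genSym, spec_genSym]
    by_cases hab : a = b
    · subst hab
      rw [Matrix.diagonal_apply_eq]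
      norm_num
    · rw [Matrix.diagonal_apply_ne _ hab, if_neg hab, if_neg hab, MvPolynomial.C_0, mul_zero,
        mul_zero, add_zero]
  rw [hmat, Matrix.det_diagonal, Finset.prod_add, MvPolynomial.coeff_sum]
  have hterm : ∀ s : Finset (Fin g), s ∈ (Finset.univ : Finset (Fin g)).powerset →
      MvPolynomial.coeff μ
        ((∏ _k ∈ s, ((MvPolynomial.X 0 : MvPolynomial (Fin 2) (MvPolynomial (Fin g) P))
            * C (C Polynomial.X)))
          * ∏ k ∈ Finset.univ \ s, ((MvPolynomial.X 1 : MvPolynomial (Fin 2) (MvPolynomial (Fin g) P)) * C (X k)))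
      = if s.card = g - (i : ℕ) then
          C (Polynomial.X ^ (g - (i : ℕ))) * ∏ k ∈ Finset.univ \ s, (X k : MvPolynomial (Fin g) P)
        else 0 := by
    intro s _
    have hcards : (Finset.univ \ s).card = g - s.card := by
      rw [Finset.card_sdiff_of_subset (Finset.subset_univ s), Finset.card_univ, Fintype.card_fin]
    rw [Finset.prod_const, Finset.prod_mul_distrib, Finset.prod_const, ← map_prod, mul_pow,
      ← map_pow, hcards]
    rw [show (MvPolynomial.X (0 : Fin 2) : MvPolynomial (Fin 2) (MvPolynomial (Fin g) P)) ^ s.card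
        * C ((C Polynomial.X : MvPolynomial (Fin g) P) ^ s.card)
        * ((MvPolynomial.X 1 : MvPolynomial (Fin 2) (MvPolynomial (Fin g) P)) ^ (g - s.card)
          * C (∏ k ∈ Finset.univ \ s, (X k : MvPolynomial (Fin g) P)))
      = MvPolynomial.monomial
          (Finsupp.single (0 : Fin 2) s.card + Finsupp.single (1 : Fin 2) (g - s.card))
          ((C Polynomial.X : MvPolynomial (Fin g) P) ^ s.card
            * ∏ k ∈ Finset.univ \ s, (X k : MvPolynomial (Fin g) P)) by
      rw [mul_comm (MvPolynomial.X (0 : Fin 2) ^ s.card), mul_comm ((MvPolynomial.X (1 : Fin 2)) ^ (g - s.card)),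
        C_mul_X_pow_eq_monomial, C_mul_X_pow_eq_monomial, MvPolynomial.monomial_mul]]
    rw [MvPolynomial.coeff_monomial]
    have hcond : (Finsupp.single (0 : Fin 2) s.card + Finsupp.single (1 : Fin 2) (g - s.card) = μ)
        ↔ s.card = g - (i : ℕ) := by
      constructor
      · intro h
        have := DFunLike.congr_fun h (0 : Fin 2)
        simpa [hμ, Finsupp.single_apply] using this
      · intro h
        rw [hμ, h, Nat.sub_sub_self hi]
    by_cases hc : s.card = g - (i : ℕ)
    · rw [if_pos (hcond.mpr hc), if_pos hc, ← map_pow, hc]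
    · rw [if_neg (fun h => hc (hcond.mp h)), if_neg hc]
  rw [Finset.sum_congr rfl hterm, ← Finset.sum_filter, ← Finset.powersetCard_eq_filter]
  rw [← Finset.mul_sum]
  congr 1
  rw [MvPolynomial.esymm]
  refine Finset.sum_nbij' (fun s => sᶜ) (fun s => sᶜ) ?_ ?_ ?_ ?_ ?_
  · intro s hs
    rw [Finset.mem_powersetCard_univ] at hs ⊢
    rw [Finset.card_compl, Fintype.card_fin, hs, Nat.sub_sub_self hi]
  · intro s hs
    rw [Finset.mem_powersetCard_univ] at hs ⊢
    rw [Finset.card_compl, Fintype.card_fin, hs]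
  · intro s _; exact compl_compl s
  · intro s _; exact compl_compl s
  · intro s _
    exact Finset.prod_congr (Finset.compl_eq_univ_sdiff s).symm (fun _ _ => rfl)

/-- The family `t^(g-i) * esymm i` is algebraically independent. -/
theorem aux_indep (hg : 0 < g) :
    Function.Injective
      (aeval (fun i : Fin (g + 1) =>
          C (Polynomial.X ^ (g - (i : ℕ))) * esymm (Fin g) (Polynomial K) (i : ℕ))
        : MvPolynomial (Fin (g + 1)) K →ₐ[K] MvPolynomial (Fin g) (Polynomial K)) := by
  set P := Polynomial K with hP
  let ι' : MvPolynomial (Fin (g + 1)) K →ₐ[K] MvPolynomial (Option (Fin g)) K :=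
    (MvPolynomial.renameEquiv K (_root_.finSuccEquiv g)).toAlgHom
  let κ : MvPolynomial (Option (Fin g)) K →ₐ[K] MvPolynomial (Fin g) P :=
    (MvPolynomial.optionEquivRight K (Fin g)).toAlgHom
  let m1 : MvPolynomial (Fin g) P →ₐ[K] MvPolynomial (Fin g) P :=
    MvPolynomial.mapAlgHom (Polynomial.aeval (Polynomial.X ^ g) : P →ₐ[K] P)
  let ρ1P : MvPolynomial (Fin g) P →ₐ[P] MvPolynomial (Fin g) P :=
    MvPolynomial.aeval fun j : Fin g => C (Polynomial.X ^ (g - 1 - (j : ℕ))) * X j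
  let ρ2P : MvPolynomial (Fin g) P →ₐ[P] MvPolynomial (Fin g) P :=
    MvPolynomial.aeval fun j : Fin g => esymm (Fin g) P ((j : ℕ) + 1)
  let ρ1 := ρ1P.restrictScalars K
  let ρ2 := ρ2P.restrictScalars K
  have hcomp : ρ2.comp (ρ1.comp (m1.comp (κ.comp ι')))
      = aeval (fun i : Fin (g + 1) =>
          C (Polynomial.X ^ (g - (i : ℕ))) * esymm (Fin g) P (i : ℕ)) := by
    apply MvPolynomial.algHom_ext
    intro i
    rw [aeval_X, AlgHom.comp_apply, AlgHom.comp_apply, AlgHom.comp_apply, AlgHom.comp_apply]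
    induction i using Fin.cases with
    | zero =>
      have e1 : ι' (X (0 : Fin (g + 1))) = X (none : Option (Fin g)) := by
        show (MvPolynomial.renameEquiv K (_root_.finSuccEquiv g)) (X 0) = _
        rw [MvPolynomial.renameEquiv_apply, rename_X, finSuccEquiv_zero]
      have e2 : κ (X (none : Option (Fin g))) = C Polynomial.X :=
        MvPolynomial.optionEquivRight_X_none K (Fin g)
      have e3 : m1 (C Polynomial.X) = C (Polynomial.X ^ g) := by
        show MvPolynomial.map _ (C Polynomial.X) = _
        rw [MvPolynomial.map_C, AlgHom.coe_toRingHom, Polynomial.aeval_X]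
      have e4 : ρ1 ((C (Polynomial.X ^ g) : MvPolynomial (Fin g) P)) = C (Polynomial.X ^ g) := by
        show ρ1P _ = _
        rw [aeval_C, MvPolynomial.algebraMap_eq]
      have e5 : ρ2 ((C (Polynomial.X ^ g) : MvPolynomial (Fin g) P)) = C (Polynomial.X ^ g) := by
        show ρ2P _ = _
        rw [aeval_C, MvPolynomial.algebraMap_eq]
      rw [e1, e2, e3, e4, e5, Fin.val_zero, Nat.sub_zero, MvPolynomial.esymm_zero, mul_one]
    | succ j =>
      have e1 : ι' (X (j.succ : Fin (g + 1))) = X (some j : Option (Fin g)) := by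
        show (MvPolynomial.renameEquiv K (_root_.finSuccEquiv g)) (X j.succ) = _
        rw [MvPolynomial.renameEquiv_apply, rename_X, finSuccEquiv_succ]
      have e2 : κ (X (some j : Option (Fin g))) = X j :=
        MvPolynomial.optionEquivRight_X_some K (Fin g) j
      have e3 : m1 (X j : MvPolynomial (Fin g) P) = X j := by
        show MvPolynomial.map _ (X j) = _
        rw [MvPolynomial.map_X]
      have e4 : ρ1 (X j : MvPolynomial (Fin g) P)
          = C (Polynomial.X ^ (g - 1 - (j : ℕ))) * X j := by
        show ρ1P _ = _
        rw [aeval_X]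
      have e5 : ρ2 ((C (Polynomial.X ^ (g - 1 - (j : ℕ))) : MvPolynomial (Fin g) P) * X j)
          = C (Polynomial.X ^ (g - 1 - (j : ℕ))) * esymm (Fin g) P ((j : ℕ) + 1) := by
        show ρ2P _ = _
        rw [_root_.map_mul, aeval_C, aeval_X, MvPolynomial.algebraMap_eq]
      rw [e1, e2, e3, e4, e5, Fin.val_succ]
      have harith : g - 1 - (j : ℕ) = g - ((j : ℕ) + 1) := by omega
      rw [harith]
  have hι' : Function.Injective ⇑ι' :=
    (MvPolynomial.renameEquiv K (_root_.finSuccEquiv g)).injective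
  have hκ : Function.Injective ⇑κ :=
    (MvPolynomial.optionEquivRight K (Fin g)).injective
  have hm1 : Function.Injective ⇑m1 := by
    have ht : Function.Injective ⇑(Polynomial.aeval (R := K) (Polynomial.X ^ g)) :=
      transcendental_iff_injective.mp ((Polynomial.transcendental_X K).pow hg)
    exact MvPolynomial.map_injective _ ht
  have hρ1 : Function.Injective ⇑ρ1 :=
    rescale_injective (R := P) (σ := Fin g)
      (fun j : Fin g => Polynomial.X ^ (g - 1 - (j : ℕ)))
      (fun j => pow_ne_zero _ Polynomial.X_ne_zero)
  have hρ2 : Function.Injective ⇑ρ2 := by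
    have hesy := MvPolynomial.esymmAlgHom_injective (σ := Fin g) (n := g) P
      (le_of_eq (Fintype.card_fin g).symm)
    intro p q h
    refine hesy (Subtype.val_injective ?_)
    rw [MvPolynomial.esymmAlgHom_apply, MvPolynomial.esymmAlgHom_apply]
    exact h
  have hinj : Function.Injective ⇑(ρ2.comp (ρ1.comp (m1.comp (κ.comp ι')))) := by
    rw [AlgHom.coe_comp, AlgHom.coe_comp, AlgHom.coe_comp, AlgHom.coe_comp]
    exact hρ2.comp (hρ1.comp (hm1.comp (hκ.comp hι')))
  rw [← hcomp]
  exact hinj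

end Stmt3Aux

/-- For every algebraically closed field `K` and every integer `g ≥ 1`, the
`g+1` polynomials `Θ_0, …, Θ_g` are algebraically independent over `K`. -/
theorem stmt3 (K : Type*) [Field K] [IsAlgClosed K] (g : ℕ) (hg : 1 ≤ g) :
    AlgebraicIndependent K (ThetaPair K g) := by
  apply AlgebraicIndependent.of_comp (Stmt3Aux.spec K g)
  have hfun : (⇑(Stmt3Aux.spec K g) ∘ ThetaPair K g)
      = fun i : Fin (g + 1) =>
        MvPolynomial.C (Polynomial.X ^ (g - (i : ℕ)))
          * MvPolynomial.esymm (Fin g) (Polynomial K) (i : ℕ) :=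
    funext fun i => Stmt3Aux.spec_theta K g i
  rw [hfun, algebraicIndependent_iff_injective_aeval]
  exact Stmt3Aux.aux_indep K g hg
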